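/- (Equations (9) and (14): the full-cycle terms vanish, χ^{(2n-k,k)} summed over (σ, π) with π ∈ S_n.) Let k ≥ 1 and n ≥ 2k. Let σ ∈ Equiv.Perm (Fin (2*n)) be the n-cycle with σ(i) = i+1 mod n for i < n and σ(i) = i for i ≥ n, and let P be the subgroup of Equiv.Perm (Fin (2*n)) consisting of all permutations π with π(i) = i for every i < n. Then Σ_{π ∈ P} (F k (σ*π) − F (k−1) (σ*π)) = 0. -/

import Mathlib

set_option linter.unusedSectionVars false
set_option linter.unusedVariables false

/-- `F k τ` is the number of `k`-element subsets of `Fin m` invariant under `τ`. -/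
def F {m : ℕ} (k : ℕ) (τ : Equiv.Perm (Fin m)) : ℕ :=
  ((Finset.univ : Finset (Finset (Fin m))).filter
    (fun s => s.card = k ∧ s.image τ = s)).card

section Counting


variable {α : Type*} [Fintype α] [DecidableEq α]

lemma image_eq_iff (π : Equiv.Perm α) (s : Finset α) :
    s.image π = s ↔ ∀ x, x ∈ s ↔ π x ∈ s := by
  constructor
  · intro h x
    constructor
    · intro hx; rw [← h]; exact Finset.mem_image_of_mem _ hx
    · intro hx; rw [← h] at hx
      obtain ⟨y, hy, hyx⟩ := Finset.mem_image.1 hx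
      rwa [← π.injective hyx]
  · intro h
    ext a
    constructor
    · intro ha
      obtain ⟨y, hy, rfl⟩ := Finset.mem_image.1 ha
      exact (h y).1 hy
    · intro ha
      refine Finset.mem_image.2 ⟨π.symm a, ?_, π.apply_symm_apply a⟩
      have := (h (π.symm a)).2
      rw [π.apply_symm_apply] at this
      exact this ha

noncomputable def stabEquiv (s : Finset α) :
    (Equiv.Perm {x // x ∈ s} × Equiv.Perm {x // ¬ x ∈ s}) ≃ {π : Equiv.Perm α // s.image π = s} where
  toFun p := ⟨Equiv.Perm.subtypeCongr p.1 p.2, by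
    rw [image_eq_iff]
    intro x
    by_cases h : x ∈ s
    · simp only [Equiv.Perm.subtypeCongr.left_apply _ _ h]
      exact iff_of_true h (p.1 ⟨x, h⟩).2
    · simp only [Equiv.Perm.subtypeCongr.right_apply _ _ h]
      exact iff_of_false h (p.2 ⟨x, h⟩).2⟩
  invFun π := ⟨(π : Equiv.Perm α).subtypePerm (fun x => ((image_eq_iff _ s).1 π.2 x).symm),
    (π : Equiv.Perm α).subtypePerm (fun x => not_iff_not.2 ((image_eq_iff _ s).1 π.2 x).symm)⟩
  left_inv p := by
    ext x
    · simp [Equiv.Perm.subtypeCongr.left_apply _ _ x.2]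
    · simp [Equiv.Perm.subtypeCongr.right_apply _ _ x.2]
  right_inv π := by
    ext x
    by_cases h : x ∈ s
    · simp [Equiv.Perm.subtypeCongr.left_apply _ _ h]
    · simp [Equiv.Perm.subtypeCongr.right_apply _ _ h]

lemma card_stab (s : Finset α) :
    (Finset.univ.filter (fun π : Equiv.Perm α => s.image π = s)).card
      = s.card.factorial * (Fintype.card α - s.card).factorial := by
  rw [← Fintype.card_subtype]
  rw [← Fintype.card_congr (stabEquiv s)]
  rw [Fintype.card_prod, Fintype.card_perm, Fintype.card_perm, Fintype.card_coe,
    Fintype.card_subtype_compl]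
  simp [Fintype.card_coe]

lemma sum_F (k : ℕ) (hk : k ≤ Fintype.card α) :
    ∑ π : Equiv.Perm α,
        ((Finset.univ.filter (fun s : Finset α => s.card = k ∧ s.image π = s)).card)
      = (Fintype.card α).factorial := by
  have h1 : ∀ π : Equiv.Perm α,
      ((Finset.univ.filter (fun s : Finset α => s.card = k ∧ s.image π = s)).card)
        = ∑ s : Finset α, if s.card = k ∧ s.image π = s then 1 else 0 := by
    intro π; rw [Finset.card_filter]
  simp_rw [h1]
  rw [Finset.sum_comm]
  have h2 : ∀ s : Finset α,
      (∑ π : Equiv.Perm α, if s.card = k ∧ s.image π = s then 1 else 0)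
        = if s.card = k then (Finset.univ.filter (fun π : Equiv.Perm α => s.image π = s)).card else 0 := by
    intro s
    by_cases h : s.card = k
    · rw [if_pos h, Finset.card_filter]
      apply Finset.sum_congr rfl
      intro π _
      simp [h]
    · simp [h]
  simp_rw [h2]
  have h3 : ∀ s : Finset α,
      (if s.card = k then (Finset.univ.filter (fun π : Equiv.Perm α => s.image π = s)).card else 0)
        = if s.card = k then k.factorial * (Fintype.card α - k).factorial else 0 := by
    intro s
    by_cases h : s.card = k
    · rw [if_pos h, if_pos h, card_stab, h]
    · simp [h]
  simp_rw [h3]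
  rw [← Finset.sum_filter, Finset.sum_const, smul_eq_mul,
    ← Fintype.card_subtype, Fintype.card_finset_len, ← mul_assoc,
    Nat.choose_mul_factorial_mul_factorial hk]


end Counting



def topEquiv (n : ℕ) : Fin n ≃ {x : Fin (2*n) // n ≤ (x:ℕ)} where
  toFun i := ⟨⟨n + (i:ℕ), by omega⟩, by simp⟩
  invFun x := ⟨(x:ℕ) - n, by have h1 := x.1.isLt; have h2 := x.2; omega⟩
  left_inv i := by ext; simp
  right_inv x := by
    have h2 := x.2
    ext
    simp
    omega

lemma mem_top_of_invariant (n : ℕ) (hn : 0 < n)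
    (σ π : Equiv.Perm (Fin (2*n)))
    (hσ : ∀ i : Fin (2*n), ((σ i : ℕ) = if (i:ℕ) < n then ((i:ℕ)+1) % n else (i:ℕ)))
    (hπ : ∀ i : Fin (2*n), (i:ℕ) < n → π i = i)
    (s : Finset (Fin (2*n))) (hs : s.image (σ*π) = s) (hcard : s.card < n) :
    ∀ x ∈ s, n ≤ (x:ℕ) := by
  intro x hx
  by_contra hlt
  push_neg at hlt
  have claim : ∀ m : ℕ, (⟨((x:ℕ) + m) % n, by
      have := Nat.mod_lt ((x:ℕ) + m) hn; omega⟩ : Fin (2*n)) ∈ s := by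
    intro m
    induction m with
    | zero =>
      have heq : (⟨((x:ℕ) + 0) % n, by have := Nat.mod_lt ((x:ℕ) + 0) hn; omega⟩ : Fin (2*n)) = x :=
        Fin.ext (by simp [Nat.mod_eq_of_lt hlt])
      rwa [heq]
    | succ m ih =>
      set y : Fin (2*n) := ⟨((x:ℕ) + m) % n, by have := Nat.mod_lt ((x:ℕ) + m) hn; omega⟩ with hydef
      have hmem := Finset.mem_image_of_mem (σ*π) ih
      rw [hs] at hmem
      have hy : (y : ℕ) < n := Nat.mod_lt _ hn
      have h1 : (σ*π) y = σ y := by rw [Equiv.Perm.mul_apply, hπ _ hy]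
      have h2 : ((σ*π) y : ℕ) = ((x:ℕ) + (m+1)) % n := by
        rw [h1, hσ y, if_pos hy]
        show ((y:ℕ) + 1) % n = _
        rw [hydef]
        show (((x:ℕ) + m) % n + 1) % n = _
        rw [Nat.mod_add_mod, Nat.add_assoc]
      have heq : (⟨((x:ℕ) + (m+1)) % n, by
          have := Nat.mod_lt ((x:ℕ) + (m+1)) hn; omega⟩ : Fin (2*n)) = (σ*π) y :=
        Fin.ext h2.symm
      rw [heq]
      exact hmem
  have hsub : (Finset.univ.map
      (⟨fun j : Fin n => (⟨(j:ℕ), by omega⟩ : Fin (2*n)),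
        by intro a b hab; apply Fin.ext; simpa [Fin.ext_iff] using hab⟩ : Fin n ↪ Fin (2*n))) ⊆ s := by
    intro y hy
    rw [Finset.mem_map] at hy
    obtain ⟨j, _, rfl⟩ := hy
    have h := claim ((j:ℕ) + n - (x:ℕ))
    have heq : (⟨((x:ℕ) + ((j:ℕ) + n - (x:ℕ))) % n, by
        have := Nat.mod_lt ((x:ℕ) + ((j:ℕ) + n - (x:ℕ))) hn; omega⟩ : Fin (2*n))
        = (⟨(j:ℕ), by omega⟩ : Fin (2*n)) := by
      apply Fin.ext
      show ((x:ℕ) + ((j:ℕ) + n - (x:ℕ))) % n = (j:ℕ)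
      rw [show (x:ℕ) + ((j:ℕ) + n - (x:ℕ)) = (j:ℕ) + n by omega, Nat.add_mod_right,
        Nat.mod_eq_of_lt j.isLt]
    rwa [heq] at h
  have hle := Finset.card_le_card hsub
  rw [Finset.card_map, Finset.card_univ, Fintype.card_fin] at hle
  omega

def gEmb (n : ℕ) : Fin n ↪ Fin (2*n) :=
  ⟨fun i => ((topEquiv n i : {x : Fin (2*n) // n ≤ (x:ℕ)}) : Fin (2*n)),
    fun a b hab => (topEquiv n).injective (Subtype.ext hab)⟩

lemma extend_fixes_low (n : ℕ) (ρ : Equiv.Perm (Fin n)) (i : Fin (2*n)) (hi : (i:ℕ) < n) :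
    ρ.extendDomain (topEquiv n) i = i :=
  Equiv.Perm.extendDomain_apply_not_subtype _ _ (by omega)

lemma hcommPt (n : ℕ) (σ : Equiv.Perm (Fin (2*n)))
    (hσ : ∀ i : Fin (2*n), ((σ i : ℕ) = if (i:ℕ) < n then ((i:ℕ)+1) % n else (i:ℕ)))
    (ρ : Equiv.Perm (Fin n)) (i : Fin n) :
    (σ * ρ.extendDomain (topEquiv n)) (gEmb n i) = gEmb n (ρ i) := by
  rw [Equiv.Perm.mul_apply]
  have h1 : ρ.extendDomain (topEquiv n) (gEmb n i) = gEmb n (ρ i) :=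
    Equiv.Perm.extendDomain_apply_image ρ (topEquiv n) i
  rw [h1]
  apply Fin.ext
  rw [hσ (gEmb n (ρ i))]
  have : n ≤ ((gEmb n (ρ i) : Fin (2*n)) : ℕ) := (topEquiv n (ρ i)).2
  rw [if_neg (by omega)]

lemma hcomm (n : ℕ) (σ : Equiv.Perm (Fin (2*n)))
    (hσ : ∀ i : Fin (2*n), ((σ i : ℕ) = if (i:ℕ) < n then ((i:ℕ)+1) % n else (i:ℕ)))
    (ρ : Equiv.Perm (Fin n)) (t : Finset (Fin n)) :
    (t.map (gEmb n)).image (σ * ρ.extendDomain (topEquiv n)) = (t.image ρ).map (gEmb n) := by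
  rw [Finset.map_eq_image, Finset.map_eq_image, Finset.image_image, Finset.image_image]
  exact Finset.image_congr (fun x _ => hcommPt n σ hσ ρ x)

lemma F_extend (n k : ℕ) (hn : 0 < n) (hkn : k < n)
    (σ : Equiv.Perm (Fin (2*n)))
    (hσ : ∀ i : Fin (2*n), ((σ i : ℕ) = if (i:ℕ) < n then ((i:ℕ)+1) % n else (i:ℕ)))
    (ρ : Equiv.Perm (Fin n)) :
    F k (σ * ρ.extendDomain (topEquiv n)) = F k ρ := by
  unfold F
  symm
  apply Finset.card_bij (fun t _ => t.map (gEmb n))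
  · intro t ht
    rw [Finset.mem_filter] at ht ⊢
    refine ⟨Finset.mem_univ _, ?_, ?_⟩
    · rw [Finset.card_map]; exact ht.2.1
    · rw [hcomm n σ hσ ρ t, ht.2.2]
  · intro t1 _ t2 _ h
    exact Finset.map_injective _ h
  · intro s hs
    rw [Finset.mem_filter] at hs
    obtain ⟨-, hcard, hinv⟩ := hs
    have htop : ∀ x ∈ s, n ≤ (x:ℕ) :=
      mem_top_of_invariant n hn σ _ hσ (extend_fixes_low n ρ) s hinv (by omega)
    set back : Fin (2*n) → Fin n := fun x => ⟨(x:ℕ) % n, Nat.mod_lt _ hn⟩ with hback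
    have hgb : ∀ x ∈ s, gEmb n (back x) = x := by
      intro x hx
      have h1 := htop x hx
      have h2 := x.isLt
      apply Fin.ext
      show n + ((x:ℕ) % n) = (x:ℕ)
      rw [Nat.mod_eq_sub_mod h1, Nat.mod_eq_of_lt (by omega)]
      omega
    refine ⟨s.image back, ?_, ?_⟩
    · have hts : (s.image back).map (gEmb n) = s := by
        rw [Finset.map_eq_image, Finset.image_image]
        exact Eq.trans (Finset.image_congr (fun x hx => hgb x hx)) Finset.image_id
      rw [Finset.mem_filter]
      refine ⟨Finset.mem_univ _, ?_, ?_⟩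
      · have := congrArg Finset.card hts
        rw [Finset.card_map] at this
        rw [this, hcard]
      · apply Finset.map_injective (gEmb n)
        rw [← hcomm n σ hσ ρ, hts, hinv]
    · rw [Finset.map_eq_image, Finset.image_image]
      exact Eq.trans (Finset.image_congr (fun x hx => hgb x hx)) Finset.image_id

lemma sum_over_P (n j : ℕ) (hn : 0 < n) (hj : j < n)
    (σ : Equiv.Perm (Fin (2*n)))
    (hσ : ∀ i : Fin (2*n), ((σ i : ℕ) = if (i:ℕ) < n then ((i:ℕ)+1) % n else (i:ℕ))) :
    ∑ ρ : Equiv.Perm (Fin n), F j ρ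
      = ∑ π ∈ (Finset.univ : Finset (Equiv.Perm (Fin (2*n)))).filter
          (fun π => ∀ i : Fin (2*n), (i : ℕ) < n → π i = i), F j (σ * π) := by
  apply Finset.sum_bij (fun ρ _ => ρ.extendDomain (topEquiv n))
  · intro ρ _
    rw [Finset.mem_filter]
    exact ⟨Finset.mem_univ _, fun i hi => extend_fixes_low n ρ i hi⟩
  · intro ρ1 _ ρ2 _ h
    ext a
    have h1 := Equiv.Perm.extendDomain_apply_image ρ1 (topEquiv n) a
    have h2 := Equiv.Perm.extendDomain_apply_image ρ2 (topEquiv n) a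
    rw [h] at h1
    have h3 := h1.symm.trans h2
    exact congrArg Fin.val ((topEquiv n).injective (Subtype.ext h3))
  · intro π hπ
    rw [Finset.mem_filter] at hπ
    have hlow := hπ.2
    have htop : ∀ x : Fin (2*n), (n ≤ (x:ℕ)) ↔ (n ≤ ((π x : Fin (2*n)):ℕ)) := by
      intro x
      constructor
      · intro hx
        by_contra h
        push_neg at h
        have h2 := hlow (π x) h
        have := π.injective h2
        rw [this] at h
        omega
      · intro hpx
        by_contra h
        push_neg at h
        rw [hlow x h] at hpx
        omega
    refine ⟨((topEquiv n).permCongr.symm) (π.subtypePerm (fun x => (htop x).symm)), Finset.mem_univ _, ?_⟩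
    apply Equiv.ext
    intro x
    by_cases hx : n ≤ (x:ℕ)
    · rw [Equiv.Perm.extendDomain_apply_subtype _ (topEquiv n) hx]
      simp [Equiv.permCongr_apply, Equiv.Perm.subtypePerm_apply]
    · exact (Equiv.Perm.extendDomain_apply_not_subtype _ (topEquiv n) hx).trans
        (hlow x (by omega)).symm
  · intro ρ _
    exact (F_extend n j hn hj σ hσ ρ).symm


/-- Equations (9) and (14): the full-cycle terms vanish,
`Σ_{π ∈ P} χ^{(2n-k,k)}(σπ) = Σ_{π ∈ P} (F k (σπ) - F (k-1) (σπ)) = 0`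
for `1 ≤ k` and `n ≥ 2k`, where `P ≅ S_n` fixes all points `i < n`. -/
theorem full_cycle_terms_vanish (n k : ℕ) (hk : 1 ≤ k) (hn : 2 * k ≤ n)
    (σ : Equiv.Perm (Fin (2 * n)))
    (hσ : ∀ i : Fin (2 * n),
      ((σ i : ℕ) = if (i : ℕ) < n then ((i : ℕ) + 1) % n else (i : ℕ))) :
    ∑ π ∈ (Finset.univ : Finset (Equiv.Perm (Fin (2 * n)))).filter
        (fun π => ∀ i : Fin (2 * n), (i : ℕ) < n → π i = i),
      ((F k (σ * π) : ℤ) - (F (k - 1) (σ * π) : ℤ)) = 0 := by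
  have hn0 : 0 < n := by omega
  have key : ∀ j, j < n →
      (∑ π ∈ (Finset.univ : Finset (Equiv.Perm (Fin (2 * n)))).filter
        (fun π => ∀ i : Fin (2 * n), (i : ℕ) < n → π i = i), F j (σ * π)) = n.factorial := by
    intro j hj
    rw [← sum_over_P n j hn0 hj σ hσ]
    have h1 : ∑ ρ : Equiv.Perm (Fin n), F j ρ = (Fintype.card (Fin n)).factorial :=
      sum_F j (by rw [Fintype.card_fin]; omega)
    rw [h1, Fintype.card_fin]
  rw [Finset.sum_sub_distrib, ← Nat.cast_sum, ← Nat.cast_sum,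
    key k (by omega), key (k-1) (by omega), sub_self]
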